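/- Let G be a 3-connected graph with spanning tree T and non-empty Y ⊆ E(G)∖T, and let Q := ⋂_{y∈Y} P_y(T) be the intersection of the fundamental paths of all Y-edges. Then any two inner vertices of Q that are articulation vertices of G minus Y must be adjacent on Q; in particular there are at most two such inner vertices. -/
import Mathlib


/-- A multigraph on vertex type `V` with edge type `E`: each edge has an
unordered pair of endpoints. -/
structure Multigraph (V E : Type) where
  ends : E → Sym2 V

namespace Multigraph

variable {V E : Type}

/-- Adjacency within the subgraph with edge set `F` and vertex set `S`. -/
def Adj (G : Multigraph V E) (F : Set E) (S : Set V) (a b : V) : Prop :=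
  a ∈ S ∧ b ∈ S ∧ ∃ e ∈ F, G.ends e = s(a, b)

/-- Reachability (lying in the same connected component) in the subgraph with
edge set `F` and vertex set `S`. -/
def Reach (G : Multigraph V E) (F : Set E) (S : Set V) : V → V → Prop :=
  Relation.ReflTransGen (G.Adj F S)

/-- `v` is `Y`-splittable: the auxiliary graph `H^v_Y`, whose vertices are the
connected components of `G` minus the edges `Y` and the vertex `v`, with edges
induced by `Y`-edges between components (loops for `Y`-edges within a
component), is bipartite.  This is expressed by a 2-colouring of the vertices
which is constant on the components of `G^v_Y` and proper on `Y`-edges not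
incident to `v`. -/
def Splittable (G : Multigraph V E) (Y : Set E) (v : V) : Prop :=
  ∃ c : V → Bool,
    (∀ a b : V, G.Reach (Set.univ \ Y) {v}ᶜ a b → c a = c b) ∧
    (∀ y ∈ Y, ∀ a b : V, G.ends y = s(a, b) → a ≠ v → b ≠ v → c a ≠ c b)

/-- `T` is a spanning tree of `G`: the subgraph `(V, T)` is connected and
every edge of `T` is a bridge of it. -/
def IsSpanningTree (G : Multigraph V E) (T : Set E) : Prop :=
  (∀ a b : V, G.Reach T Set.univ a b) ∧
  ∀ f ∈ T, ∃ a b : V, ¬ G.Reach (T \ {f}) Set.univ a b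

/-- The set of tree edges lying on the tree path `P_{u,w}(T)` between `u` and
`w`: a tree edge lies on this path iff deleting it separates `u` from `w`. -/
def pathEdges (G : Multigraph V E) (T : Set E) (u w : V) : Set E :=
  {f | f ∈ T ∧ ¬ G.Reach (T \ {f}) Set.univ u w}

/-- The fundamental path `P_e(T)` of an edge `e` (as a set of tree edges). -/
def fundPath (G : Multigraph V E) (T : Set E) (e : E) : Set E :=
  {f | f ∈ T ∧ ∀ a b : V, G.ends e = s(a, b) → ¬ G.Reach (T \ {f}) Set.univ a b}

/-- `v` lies on the tree path between `u` and `w`. -/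
def OnPath (G : Multigraph V E) (T : Set E) (u w v : V) : Prop :=
  v = u ∨ v = w ∨ ¬ G.Reach T {v}ᶜ u w

/-- `v` lies on the fundamental path `P_e(T)` of the edge `e`. -/
def OnFundPath (G : Multigraph V E) (T : Set E) (e : E) (v : V) : Prop :=
  ∀ a b : V, G.ends e = s(a, b) → G.OnPath T a b v

/-- The vertices covered by an edge set `F`. -/
def verts (G : Multigraph V E) (F : Set E) : Set V :=
  {v | ∃ e ∈ F, v ∈ G.ends e}

/-- `P⁻¹_{u,w}(G,T)`: the non-tree edges whose fundamental path contains the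
tree path from `u` to `w`. -/
def Pinv (G : Multigraph V E) (T : Set E) (u w : V) : Set E :=
  {e | e ∉ T ∧ G.pathEdges T u w ⊆ G.fundPath T e}

/-- A multigraph is simple if it has no loops and no parallel edges. -/
def Simple (G : Multigraph V E) : Prop :=
  (∀ e : E, ¬ (G.ends e).IsDiag) ∧ ∀ e f : E, G.ends e = G.ends f → e = f

/-- A `k`-separation: a partition of the edges into two parts, each of size at
least `k`, whose vertex sets share exactly `k` vertices. -/
def IsSep (G : Multigraph V E) (k : ℕ) (E1 E2 : Set E) : Prop :=
  E1 ∪ E2 = Set.univ ∧ Disjoint E1 E2 ∧ k ≤ E1.ncard ∧ k ≤ E2.ncard ∧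
    (G.verts E1 ∩ G.verts E2).ncard = k

/-- Tutte `k`-connectivity: connected and without `ℓ`-separations for
`1 ≤ ℓ < k`. -/
def TutteConnected (G : Multigraph V E) (k : ℕ) : Prop :=
  (∀ a b : V, G.Reach Set.univ Set.univ a b) ∧
  ∀ l : ℕ, 1 ≤ l → l < k → ¬ ∃ E1 E2 : Set E, G.IsSep l E1 E2

/-- A 2-separation with designated separating vertices `u` and `w`. -/
def IsTwoSep (G : Multigraph V E) (E1 E2 : Set E) (u w : V) : Prop :=
  E1 ∪ E2 = Set.univ ∧ Disjoint E1 E2 ∧ 2 ≤ E1.ncard ∧ 2 ≤ E2.ncard ∧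
    u ≠ w ∧ G.verts E1 ∩ G.verts E2 = {u, w}

/-- `v` is an articulation vertex of the subgraph with edge set `F`: after
removing `v` (and its incident edges), some two remaining vertices are
disconnected. -/
def ArticulationVertex (G : Multigraph V E) (F : Set E) (v : V) : Prop :=
  ∃ a b : V, a ≠ v ∧ b ≠ v ∧ ¬ G.Reach F {v}ᶜ a b

/-- The subgraph on the edge set `E1`, augmented by one new edge `{u, w}`. -/
def augment (G : Multigraph V E) (E1 : Set E) (u w : V) :
    Multigraph V (↥E1 ⊕ Unit) :=
  ⟨Sum.elim (fun e => G.ends e.1) (fun _ => s(u, w))⟩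

/-- The edge set `Q` of the intersection of the fundamental paths of all
edges in `Y`. -/
def Qedges (G : Multigraph V E) (T Y : Set E) : Set E :=
  ⋂ y ∈ Y, G.fundPath T y

end Multigraph

namespace Multigraph

/-- `v` is an inner vertex of the path `Q = ⋂_{y∈Y} P_y(T)`: it lies on every
fundamental path `P_y(T)` and is incident to two distinct edges of `Q`. -/
def InnerQ {V E : Type} (G : Multigraph V E) (T Y : Set E) (v : V) : Prop :=
  (∀ y ∈ Y, G.OnFundPath T y v) ∧
  ∃ f ∈ G.Qedges T Y, ∃ g ∈ G.Qedges T Y,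
    f ≠ g ∧ v ∈ G.ends f ∧ v ∈ G.ends g

end Multigraph


namespace Multigraph

variable {V E : Type} {G : Multigraph V E} {F F' : Set E} {S S' : Set V}
variable {u v w a b p q : V} {f g e : E}

lemma Adj.symm (h : G.Adj F S a b) : G.Adj F S b a := by
  obtain ⟨ha, hb, e, he, hee⟩ := h
  exact ⟨hb, ha, e, he, by rw [hee, Sym2.eq_swap]⟩

lemma Reach.symm (h : G.Reach F S a b) : G.Reach F S b a := by
  induction h with
  | refl => exact .refl
  | tail _ h2 ih => exact Relation.ReflTransGen.head h2.symm ih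

lemma reach_mono (hF : F ⊆ F') (hS : S ⊆ S') (h : G.Reach F S u w) :
    G.Reach F' S' u w := by
  induction h with
  | refl => exact .refl
  | tail _ h2 ih =>
      obtain ⟨h2a, h2b, e, he, hee⟩ := h2
      exact ih.tail ⟨hS h2a, hS h2b, e, hF he, hee⟩

lemma reach_mem (h : G.Reach F S u w) : u = w ∨ (u ∈ S ∧ w ∈ S) := by
  induction h with
  | refl => exact Or.inl rfl
  | tail _ h2 ih =>
      rcases ih with rfl | ⟨hu, _⟩
      · exact Or.inr ⟨h2.1, h2.2.1⟩
      · exact Or.inr ⟨hu, h2.2.1⟩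

lemma reach_avoid (h : G.Reach F S u w) (hv : ¬ G.Reach F S u v) :
    G.Reach F (S ∩ {v}ᶜ) u w := by
  induction h with
  | refl => exact .refl
  | tail h1 h2 ih =>
      rename_i p' w'
      have hp : ¬ (p' = v) := fun hh => hv (hh ▸ h1)
      have hw : ¬ (w' = v) := fun hh => hv (hh ▸ h1.tail h2)
      exact ih.tail ⟨⟨h2.1, hp⟩, ⟨h2.2.1, hw⟩, h2.2.2⟩

lemma reach_drop (haf : a ∈ G.ends f) (haS : a ∉ S) (h : G.Reach F S u w) :
    G.Reach (F \ {f}) S u w := by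
  induction h with
  | refl => exact .refl
  | tail _ h2 ih =>
      obtain ⟨h2a, h2b, e, he, hee⟩ := h2
      have hef : e ≠ f := by
        rintro rfl
        rw [hee, Sym2.mem_iff] at haf
        rcases haf with rfl | rfl
        · exact haS h2a
        · exact haS h2b
      exact ih.tail ⟨h2a, h2b, e, ⟨he, hef⟩, hee⟩

lemma reach_cross (hf : G.ends f = s(p, q)) (h : G.Reach F S u w) :
    G.Reach (F \ {f}) S u w ∨
      ((G.Reach (F \ {f}) S u p ∨ G.Reach (F \ {f}) S u q) ∧
       (G.Reach (F \ {f}) S w p ∨ G.Reach (F \ {f}) S w q)) := by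
  induction h with
  | refl => exact Or.inl .refl
  | tail h1 h2 ih =>
      rename_i v' w'
      obtain ⟨h2a, h2b, e, he, hee⟩ := h2
      by_cases hef : e = f
      · subst hef
        have hvw : (v' = p ∧ w' = q) ∨ (v' = q ∧ w' = p) := by
          rw [hf] at hee; exact Sym2.eq_iff.mp hee.symm
        rcases ih with ih | ⟨ihu, _⟩
        · refine Or.inr ⟨?_, ?_⟩
          · rcases hvw with ⟨rfl, _⟩ | ⟨rfl, _⟩
            · exact Or.inl ih
            · exact Or.inr ih
          · rcases hvw with ⟨_, rfl⟩ | ⟨_, rfl⟩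
            · exact Or.inr Relation.ReflTransGen.refl
            · exact Or.inl Relation.ReflTransGen.refl
        · refine Or.inr ⟨ihu, ?_⟩
          rcases hvw with ⟨_, rfl⟩ | ⟨_, rfl⟩
          · exact Or.inr Relation.ReflTransGen.refl
          · exact Or.inl Relation.ReflTransGen.refl
      · have hadj : G.Adj (F \ {f}) S v' w' := ⟨h2a, h2b, e, ⟨he, hef⟩, hee⟩
        rcases ih with ih | ⟨ihu, ihv⟩
        · exact Or.inl (ih.tail hadj)
        · refine Or.inr ⟨ihu, ?_⟩
          rcases ihv with ihv | ihv
          · exact Or.inl ((Reach.symm (Relation.ReflTransGen.single hadj)).trans ihv)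
          · exact Or.inr ((Reach.symm (Relation.ReflTransGen.single hadj)).trans ihv)

lemma reach_dup (hfg : G.ends f = G.ends g) (hne : f ≠ g) (hg : g ∈ F)
    (h : G.Reach F S u w) : G.Reach (F \ {f}) S u w := by
  induction h with
  | refl => exact .refl
  | tail _ h2 ih =>
      obtain ⟨h2a, h2b, e, he, hee⟩ := h2
      by_cases hef : e = f
      · exact ih.tail ⟨h2a, h2b, g, ⟨hg, fun hh => hne hh.symm⟩, by rw [← hfg, ← hef, hee]⟩
      · exact ih.tail ⟨h2a, h2b, e, ⟨he, hef⟩, hee⟩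

lemma Reach.trans' (h1 : G.Reach F S u v) (h2 : G.Reach F S v w) :
    G.Reach F S u w := Relation.ReflTransGen.trans h1 h2

lemma reach_adj (h : G.Adj F S u w) : G.Reach F S u w :=
  Relation.ReflTransGen.single h

lemma reach_has_edge (h : G.Reach F S u w) (hne : u ≠ w) :
    ∃ e ∈ F, u ∈ G.ends e := by
  rcases Relation.ReflTransGen.cases_head h with rfl | ⟨c, hc, _⟩
  · exact absurd rfl hne
  · obtain ⟨_, _, e, he, hee⟩ := hc
    exact ⟨e, he, by rw [hee]; exact Sym2.mem_mk_left u c⟩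

variable {T Y : Set E}

lemma tree_sides (hT : G.IsSpanningTree T) (hf : f ∈ T)
    (hpq : G.ends f = s(p, q)) (u w : V) :
    G.Reach (T \ {f}) Set.univ u w ∨
      (G.Reach (T \ {f}) Set.univ u p ∧ G.Reach (T \ {f}) Set.univ w q) ∨
      (G.Reach (T \ {f}) Set.univ u q ∧ G.Reach (T \ {f}) Set.univ w p) := by
  rcases reach_cross hpq (hT.1 u w) with h | ⟨hu, hw⟩
  · exact Or.inl h
  rcases hu with hu | hu <;> rcases hw with hw | hw
  · exact Or.inl (hu.trans' hw.symm)
  · exact Or.inr (Or.inl ⟨hu, hw⟩)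
  · exact Or.inr (Or.inr ⟨hu, hw⟩)
  · exact Or.inl (hu.trans' hw.symm)

lemma tree_bridge (hT : G.IsSpanningTree T) (hf : f ∈ T)
    (hpq : G.ends f = s(p, q)) : ¬ G.Reach (T \ {f}) Set.univ p q := by
  intro h
  obtain ⟨u, w, huw⟩ := hT.2 f hf
  rcases tree_sides hT hf hpq u w with h' | ⟨hu, hw⟩ | ⟨hu, hw⟩
  · exact huw h'
  · exact huw ((hu.trans' (h.trans' hw.symm)))
  · exact huw ((hu.trans' (h.symm.trans' hw.symm)))

lemma no_cutvertex [Fintype V] [Fintype E] (h3 : G.TutteConnected 3)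
    (a p q : V) (hp : p ≠ a) (hq : q ≠ a) : G.Reach Set.univ {a}ᶜ p q := by
  by_cases hpq : p = q
  · exact hpq ▸ Relation.ReflTransGen.refl
  by_contra hno
  set C : Set V := {v | G.Reach Set.univ {a}ᶜ p v} with hC
  set E1 : Set E := {e | ∃ v ∈ C, v ∈ G.ends e} with hE1
  have hCa : ∀ v ∈ C, v ≠ a := by
    intro v hv
    rcases reach_mem hv with rfl | ⟨_, hv2⟩
    · exact hp
    · exact hv2
  have hCstep : ∀ v ∈ C, ∀ w' : V, ∀ e : E, G.ends e = s(v, w') → w' ≠ a → w' ∈ C := by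
    intro v hv w' e hee hw'
    exact hv.tail ⟨hCa v hv, hw', e, Set.mem_univ e, hee⟩
  have hpC : p ∈ C := Relation.ReflTransGen.refl
  have hqC : q ∉ C := hno
  -- closure of C under edges
  have hCmem : ∀ v ∈ C, ∀ e : E, v ∈ G.ends e → e ∈ E1 := by
    intro v hv e hve; exact ⟨v, hv, hve⟩
  have hCedge : ∀ e ∈ E1, ∀ w' : V, w' ∈ G.ends e → w' ≠ a → w' ∈ C := by
    intro e he w' hw' hwa
    obtain ⟨v, hv, hve⟩ := he
    by_cases hvw : v = w'
    · exact hvw ▸ hv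
    · exact hCstep v hv w' e ((Sym2.mem_and_mem_iff hvw).mp ⟨hve, hw'⟩) hwa
  have havE1 : a ∈ G.verts E1 := by
    by_contra hav
    have key : ∀ w', G.Reach Set.univ Set.univ p w' → w' ∈ C := by
      intro w' h
      induction h with
      | refl => exact hpC
      | tail h1 h2 ih =>
          rename_i v' w''
          obtain ⟨_, _, e, _, hee⟩ := h2
          have heE1 : e ∈ E1 := hCmem v' ih e (by rw [hee]; exact Sym2.mem_mk_left _ _)
          by_cases hw : w'' = a
          · exact absurd ⟨e, heE1, by rw [hee, hw]; exact Sym2.mem_mk_right _ _⟩ hav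
          · exact hCstep v' ih w'' e hee hw
    exact hqC (key q (h3.1 p q))
  have havE2 : a ∈ G.verts E1ᶜ := by
    by_contra hav
    have hallE1 : ∀ e : E, a ∈ G.ends e → e ∈ E1 := by
      intro e he
      by_contra h'
      exact hav ⟨e, h', he⟩
    have key : ∀ w', G.Reach Set.univ Set.univ q w' → w' ∉ C ∧ w' ≠ a := by
      intro w' h
      induction h with
      | refl => exact ⟨hqC, hq⟩
      | tail h1 h2 ih =>
          rename_i v' w''
          obtain ⟨_, _, e, _, hee⟩ := h2
          by_cases hw : w'' = a
          · subst hw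
            have heE1 : e ∈ E1 := hallE1 e (by rw [hee]; exact Sym2.mem_mk_right _ _)
            obtain ⟨u', hu', hue⟩ := heE1
            rw [hee] at hue
            rcases Sym2.mem_iff.mp hue with rfl | rfl
            · exact absurd hu' ih.1
            · exact absurd rfl (hCa _ hu')
          · constructor
            · intro hwC
              exact ih.1 (hCstep w'' hwC v' e (by rw [hee, Sym2.eq_swap]) ih.2)
            · exact hw
    exact (key p ((h3.1 p q).symm)).1 hpC
  have hsep : G.verts E1 ∩ G.verts E1ᶜ = {a} := by
    apply Set.eq_singleton_iff_unique_mem.mpr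
    refine ⟨⟨havE1, havE2⟩, ?_⟩
    rintro v ⟨⟨e1, he1, hv1⟩, ⟨e2, he2, hv2⟩⟩
    by_contra hva
    have hvC : v ∈ C := hCedge e1 he1 v hv1 hva
    exact he2 (hCmem v hvC e2 hv2)
  have h1sep : G.IsSep 1 E1 E1ᶜ := by
    refine ⟨Set.union_compl_self E1, disjoint_compl_right, ?_, ?_, ?_⟩
    · obtain ⟨ep, hep, hpe⟩ := reach_has_edge (h3.1 p q) hpq
      have : E1.Nonempty := ⟨ep, hCmem p hpC ep hpe⟩
      have := (Set.ncard_pos (Set.toFinite E1)).mpr this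
      omega
    · obtain ⟨eq', heq, hqe⟩ := reach_has_edge ((h3.1 p q).symm) (Ne.symm hpq)
      have heq2 : eq' ∈ E1ᶜ := by
        intro h'
        exact hqC (hCedge eq' h' q hqe hq)
      have : (E1ᶜ : Set E).Nonempty := ⟨eq', heq2⟩
      have := (Set.ncard_pos (Set.toFinite E1ᶜ)).mpr this
      omega
    · rw [hsep, Set.ncard_singleton]
  exact h3.2 1 le_rfl (by norm_num) ⟨E1, E1ᶜ, h1sep⟩

lemma sym2_rep (z : Sym2 V) : ∃ x y : V, z = s(x, y) := by
  induction z using Sym2.ind with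
  | _ x y => exact ⟨x, y, rfl⟩

lemma diff_diff_subset (T : Set E) (f₁ f₂ : E) : (T \ {f₁}) \ {f₂} ⊆ T \ {f₂} :=
  fun _ h => ⟨h.1.1, h.2⟩

/-- An endpoint of `y` cannot carry two distinct fundamental-path edges. -/
lemma endpoint_ne {a a₁ a₂ x x' : V} {f₁ f₂ : E}
    (hT : G.IsSpanningTree T)
    (hf₁T : f₁ ∈ T) (hf₂T : f₂ ∈ T) (h12 : f₁ ≠ f₂)
    (he₁ : G.ends f₁ = s(a, a₁)) (he₂ : G.ends f₂ = s(a, a₂))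
    (hy1 : ¬ G.Reach (T \ {f₁}) Set.univ x x')
    (hy2 : ¬ G.Reach (T \ {f₂}) Set.univ x x') : x ≠ a := by
  rintro rfl
  have hbr1 : ¬ G.Reach (T \ {f₁}) Set.univ x a₁ := tree_bridge hT hf₁T he₁
  have hbr2 : ¬ G.Reach (T \ {f₂}) Set.univ x a₂ := tree_bridge hT hf₂T he₂
  have hstep1 : G.Reach (T \ {f₂}) Set.univ x a₁ :=
    reach_adj ⟨Set.mem_univ x, Set.mem_univ a₁, f₁, ⟨hf₁T, h12⟩, he₁⟩
  -- x' is on the a₁ side of f₁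
  have hx'a₁ : G.Reach (T \ {f₁}) Set.univ x' a₁ := by
    rcases tree_sides hT hf₁T he₁ x x' with h | ⟨_, h⟩ | ⟨h, _⟩
    · exact absurd h hy1
    · exact h
    · exact absurd h hbr1
  rcases reach_cross he₂ hx'a₁ with h | ⟨hu, hv⟩
  · -- x' reaches a₁ avoiding both; then in T\f₂ : a -f₁- a₁ - x'
    exact hy2 (hstep1.trans' ((reach_mono (diff_diff_subset T f₁ f₂) (fun _ _ => trivial) h).symm))
  · rcases hu with hu | hu
    · -- x' ~ a avoiding both ⊆ avoiding f₁
      exact hy1 ((reach_mono (fun _ h => h.1) (fun _ _ => trivial) hu).symm)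
    · rcases hv with hv | hv
      · -- a₁ ~ a avoiding both ⊆ avoiding f₁
        exact hbr1 (reach_mono (fun _ h => h.1) (fun _ _ => trivial) hv).symm
      · -- x' ~ a₂ and a₁ ~ a₂ avoiding f₂ : a -f₁- a₁ - a₂ - x'
        have h1 : G.Reach (T \ {f₂}) Set.univ a₁ a₂ :=
          reach_mono (diff_diff_subset T f₁ f₂) (fun _ _ => trivial) hv
        have h2 : G.Reach (T \ {f₂}) Set.univ x' a₂ :=
          reach_mono (diff_diff_subset T f₁ f₂) (fun _ _ => trivial) hu
        exact hy2 ((hstep1.trans' h1).trans' h2.symm)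

lemma avoid_vertex {a p : V} {f : E} (hfT : f ∈ T)
    (h : G.Reach (T \ {f}) Set.univ u p)
    (hno : ¬ G.Reach (T \ {f}) Set.univ u a) : G.Reach T {a}ᶜ u p :=
  reach_mono (fun _ h => h.1) (fun _ h => h.2) (reach_avoid h hno)

lemma side_structure [Fintype V] [Fintype E]
    (hT : G.IsSpanningTree T) (hYne : Y.Nonempty)
    {a : V} {f₁ f₂ : E}
    (hf₁ : f₁ ∈ G.Qedges T Y) (hf₂ : f₂ ∈ G.Qedges T Y) (h12 : f₁ ≠ f₂)
    (ha1 : a ∈ G.ends f₁) (ha2 : a ∈ G.ends f₂) :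
    ∃ a₁ a₂ : V, G.ends f₁ = s(a, a₁) ∧ G.ends f₂ = s(a, a₂) ∧
      a₁ ≠ a ∧ a₂ ≠ a ∧ a₁ ≠ a₂ ∧ f₁ ∈ T ∧ f₂ ∈ T ∧
      ¬ G.Reach T {a}ᶜ a₁ a₂ ∧
      (∀ y ∈ Y, ∀ x x' : V, G.ends y = s(x, x') →
        x ≠ a ∧ x' ≠ a ∧ x ≠ x' ∧
        ((G.Reach T {a}ᶜ x a₁ ∧ G.Reach T {a}ᶜ x' a₂) ∨
         (G.Reach T {a}ᶜ x a₂ ∧ G.Reach T {a}ᶜ x' a₁))) := by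
  obtain ⟨y₀, hy₀⟩ := hYne
  have hfund₁ : ∀ y ∈ Y, f₁ ∈ G.fundPath T y := fun y hy => Set.mem_iInter₂.mp hf₁ y hy
  have hfund₂ : ∀ y ∈ Y, f₂ ∈ G.fundPath T y := fun y hy => Set.mem_iInter₂.mp hf₂ y hy
  have hf₁T : f₁ ∈ T := (hfund₁ y₀ hy₀).1
  have hf₂T : f₂ ∈ T := (hfund₂ y₀ hy₀).1
  obtain ⟨a₁, he₁⟩ := Sym2.mem_iff_exists.mp ha1
  obtain ⟨a₂, he₂⟩ := Sym2.mem_iff_exists.mp ha2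
  obtain ⟨x₀, x₀', hy₀e⟩ := sym2_rep (G.ends y₀)
  have hcut₁ : ¬ G.Reach (T \ {f₁}) Set.univ x₀ x₀' := (hfund₁ y₀ hy₀).2 x₀ x₀' hy₀e
  have hcut₂ : ¬ G.Reach (T \ {f₂}) Set.univ x₀ x₀' := (hfund₂ y₀ hy₀).2 x₀ x₀' hy₀e
  have ha₁a : a₁ ≠ a := by
    rintro rfl
    rcases reach_cross he₁ (hT.1 x₀ x₀') with h | ⟨hu, hv⟩
    · exact hcut₁ h
    · rcases hu with hu | hu <;> rcases hv with hv | hv <;>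
        exact hcut₁ (hu.trans' hv.symm)
  have ha₂a : a₂ ≠ a := by
    rintro rfl
    rcases reach_cross he₂ (hT.1 x₀ x₀') with h | ⟨hu, hv⟩
    · exact hcut₂ h
    · rcases hu with hu | hu <;> rcases hv with hv | hv <;>
        exact hcut₂ (hu.trans' hv.symm)
  have ha₁₂ : a₁ ≠ a₂ := by
    rintro rfl
    exact hcut₁ (reach_dup (he₁.trans he₂.symm) h12 hf₂T (hT.1 x₀ x₀'))
  have hbr1 : ¬ G.Reach (T \ {f₁}) Set.univ a a₁ := tree_bridge hT hf₁T he₁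
  have hbr2 : ¬ G.Reach (T \ {f₂}) Set.univ a a₂ := tree_bridge hT hf₂T he₂
  have hTa : ¬ G.Reach T {a}ᶜ a₁ a₂ := by
    intro h
    have h' : G.Reach (T \ {f₁}) Set.univ a₁ a₂ :=
      reach_mono (fun _ h => h) (fun _ _ => trivial)
        (reach_drop (he₁ ▸ Sym2.mem_mk_left a a₁) (by simp) h)
    have hstep : G.Reach (T \ {f₁}) Set.univ a a₂ :=
      reach_adj ⟨Set.mem_univ a, Set.mem_univ a₂, f₂, ⟨hf₂T, fun hh => h12 hh.symm⟩, he₂⟩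
    exact hbr1 (hstep.trans' h'.symm)
  refine ⟨a₁, a₂, he₁, he₂, ha₁a, ha₂a, ha₁₂, hf₁T, hf₂T, hTa, ?_⟩
  intro y hy x x' hye
  have hc₁ : ¬ G.Reach (T \ {f₁}) Set.univ x x' := (hfund₁ y hy).2 x x' hye
  have hc₂ : ¬ G.Reach (T \ {f₂}) Set.univ x x' := (hfund₂ y hy).2 x x' hye
  have hc₁' : ¬ G.Reach (T \ {f₁}) Set.univ x' x := fun h => hc₁ h.symm
  have hc₂' : ¬ G.Reach (T \ {f₂}) Set.univ x' x := fun h => hc₂ h.symm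
  have hxa : x ≠ a := endpoint_ne hT hf₁T hf₂T h12 he₁ he₂ hc₁ hc₂
  have hx'a : x' ≠ a := endpoint_ne hT hf₁T hf₂T h12 he₁ he₂ hc₁' hc₂'
  have hxx' : x ≠ x' := by rintro rfl; exact hc₁ Relation.ReflTransGen.refl
  refine ⟨hxa, hx'a, hxx', ?_⟩
  rcases tree_sides hT hf₁T he₁ x x' with h | ⟨hxA, hx'A⟩ | ⟨hxA, hx'A⟩
  · exact absurd h hc₁
  · -- x ~₁ a, x' ~₁ a₁
    rcases tree_sides hT hf₂T he₂ x x' with h | ⟨hxB, hx'B⟩ | ⟨hxB, hx'B⟩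
    · exact absurd h hc₂
    · -- x ~₂ a, x' ~₂ a₂ : impossible
      have t1 : G.Reach T {a}ᶜ x' a₁ :=
        avoid_vertex hf₁T hx'A (fun h => hc₁ (hxA.trans' h.symm))
      have t2 : G.Reach T {a}ᶜ x' a₂ :=
        avoid_vertex hf₂T hx'B (fun h => hc₂ (hxB.trans' h.symm))
      exact absurd (t1.symm.trans' t2) hTa
    · -- x ~₂ a₂, x' ~₂ a
      have t1 : G.Reach T {a}ᶜ x' a₁ :=
        avoid_vertex hf₁T hx'A (fun h => hc₁ (hxA.trans' h.symm))
      have t2 : G.Reach T {a}ᶜ x a₂ :=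
        avoid_vertex hf₂T hxB (fun h => hc₂ (h.trans' hx'B.symm))
      exact Or.inr ⟨t2, t1⟩
  · -- x ~₁ a₁, x' ~₁ a
    rcases tree_sides hT hf₂T he₂ x x' with h | ⟨hxB, hx'B⟩ | ⟨hxB, hx'B⟩
    · exact absurd h hc₂
    · -- x ~₂ a, x' ~₂ a₂
      have t1 : G.Reach T {a}ᶜ x a₁ :=
        avoid_vertex hf₁T hxA (fun h => hc₁ (h.trans' hx'A.symm))
      have t2 : G.Reach T {a}ᶜ x' a₂ :=
        avoid_vertex hf₂T hx'B (fun h => hc₂ (hxB.trans' h.symm))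
      exact Or.inl ⟨t1, t2⟩
    · -- x ~₂ a₂, x' ~₂ a : impossible
      have t1 : G.Reach T {a}ᶜ x a₁ :=
        avoid_vertex hf₁T hxA (fun h => hc₁ (h.trans' hx'A.symm))
      have t2 : G.Reach T {a}ᶜ x a₂ :=
        avoid_vertex hf₂T hxB (fun h => hc₂ (h.trans' hx'B.symm))
      exact absurd (t1.symm.trans' t2) hTa

lemma sides_not_reach [Fintype V] [Fintype E]
    (h3 : G.TutteConnected 3)
    {a a₁ a₂ : V}
    (hart : G.ArticulationVertex (Set.univ \ Y) a)
    (hTsub : T ⊆ Set.univ \ Y)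
    (hside : ∀ y ∈ Y, ∀ x x' : V, G.ends y = s(x, x') →
        x ≠ a ∧ x' ≠ a ∧ x ≠ x' ∧
        ((G.Reach T {a}ᶜ x a₁ ∧ G.Reach T {a}ᶜ x' a₂) ∨
         (G.Reach T {a}ᶜ x a₂ ∧ G.Reach T {a}ᶜ x' a₁))) :
    ¬ G.Reach (Set.univ \ Y) {a}ᶜ a₁ a₂ := by
  intro hR
  obtain ⟨p, q, hp, hq, hpq⟩ := hart
  apply hpq
  have hcut := no_cutvertex h3 a p q hp hq
  have key : ∀ w', G.Reach Set.univ {a}ᶜ p w' → G.Reach (Set.univ \ Y) {a}ᶜ p w' := by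
    intro w' h
    induction h with
    | refl => exact Relation.ReflTransGen.refl
    | tail h1 h2 ih =>
        rename_i v' w''
        obtain ⟨hv'm, hw'm, e, _, hee⟩ := h2
        refine Relation.ReflTransGen.trans ih ?_
        by_cases hY : e ∈ Y
        · obtain ⟨_, _, _, hor⟩ := hside e hY v' w'' hee
          rcases hor with ⟨t1, t2⟩ | ⟨t1, t2⟩
          · exact ((reach_mono hTsub (fun _ h => h) t1).trans' hR).trans'
              (reach_mono hTsub (fun _ h => h) t2).symm
          · exact ((reach_mono hTsub (fun _ h => h) t1).trans' hR.symm).trans'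
              (reach_mono hTsub (fun _ h => h) t2).symm
        · exact reach_adj ⟨hv'm, hw'm, e, ⟨Set.mem_univ e, hY⟩, hee⟩
  exact key q hcut

lemma locate {a a₁ a₂ b x x' : V} {f₁ f₂ : E}
    (hf₁T : f₁ ∈ T) (hf₂T : f₂ ∈ T)
    (he₁ : G.ends f₁ = s(a, a₁)) (he₂ : G.ends f₂ = s(a, a₂))
    (hTa : ¬ G.Reach T {a}ᶜ a₁ a₂)
    (hx : G.Reach T {a}ᶜ x a₁) (hx' : G.Reach T {a}ᶜ x' a₂)
    (hone : G.OnPath T x x' b) (hba : b ≠ a) :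
    G.Reach T {a}ᶜ b a₁ ∨ G.Reach T {a}ᶜ b a₂ := by
  by_contra hno
  push_neg at hno
  obtain ⟨hno1, hno2⟩ := hno
  have hba₁ : a₁ ≠ b := by rintro rfl; exact hno1 Relation.ReflTransGen.refl
  have hba₂ : a₂ ≠ b := by rintro rfl; exact hno2 Relation.ReflTransGen.refl
  rcases hone with rfl | rfl | hone
  · exact hno1 hx
  · exact hno2 hx'
  apply hone
  have hxb : ¬ G.Reach T {a}ᶜ x b := fun h => hno1 (h.symm.trans' hx)
  have hx'b : ¬ G.Reach T {a}ᶜ x' b := fun h => hno2 (h.symm.trans' hx')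
  have t1 : G.Reach T {b}ᶜ x a₁ :=
    reach_mono (fun _ h => h) (fun _ h => h.2) (reach_avoid hx hxb)
  have t2 : G.Reach T {b}ᶜ x' a₂ :=
    reach_mono (fun _ h => h) (fun _ h => h.2) (reach_avoid hx' hx'b)
  have s1 : G.Reach T {b}ᶜ a₁ a :=
    reach_adj ⟨hba₁, Ne.symm hba, f₁, hf₁T, by rw [he₁, Sym2.eq_swap]⟩
  have s2 : G.Reach T {b}ᶜ a a₂ :=
    reach_adj ⟨Ne.symm hba, hba₂, f₂, hf₂T, he₂⟩
  exact ((t1.trans' s1).trans' s2).trans' t2.symm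

lemma key_lemma [Fintype V] [Fintype E]
    (h3 : G.TutteConnected 3) (hT : G.IsSpanningTree T)
    (hYT : ∀ y ∈ Y, y ∉ T)
    {a b a₁ a₂ b₁ b₂ : V} {f₁ f₂ g₁ g₂ : E}
    (hab : a ≠ b)
    (hf₁T : f₁ ∈ T) (hf₂T : f₂ ∈ T) (hg₁T : g₁ ∈ T) (hg₂T : g₂ ∈ T)
    (he₁ : G.ends f₁ = s(a, a₁)) (he₂ : G.ends f₂ = s(a, a₂))
    (hge₁ : G.ends g₁ = s(b, b₁)) (hge₂ : G.ends g₂ = s(b, b₂))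
    (ha₁a : a₁ ≠ a) (hb₂b : b₂ ≠ b)
    (hf₂Q : f₂ ∈ G.Qedges T Y)
    (hTa : ¬ G.Reach T {a}ᶜ a₁ a₂) (hTb : ¬ G.Reach T {b}ᶜ b₁ b₂)
    (hsideA : ∀ y ∈ Y, ∀ x x' : V, G.ends y = s(x, x') →
        x ≠ a ∧ x' ≠ a ∧ x ≠ x' ∧
        ((G.Reach T {a}ᶜ x a₁ ∧ G.Reach T {a}ᶜ x' a₂) ∨
         (G.Reach T {a}ᶜ x a₂ ∧ G.Reach T {a}ᶜ x' a₁)))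
    (hsideB : ∀ y ∈ Y, ∀ x x' : V, G.ends y = s(x, x') →
        x ≠ b ∧ x' ≠ b ∧ x ≠ x' ∧
        ((G.Reach T {b}ᶜ x b₁ ∧ G.Reach T {b}ᶜ x' b₂) ∨
         (G.Reach T {b}ᶜ x b₂ ∧ G.Reach T {b}ᶜ x' b₁)))
    (hOnB : ∀ y ∈ Y, G.OnFundPath T y b)
    (hRa : ¬ G.Reach (Set.univ \ Y) {a}ᶜ a₁ a₂)
    (hRb : ¬ G.Reach (Set.univ \ Y) {b}ᶜ b₁ b₂)
    (hba₂ : G.Reach T {a}ᶜ b a₂)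
    (hab₁ : G.Reach T {b}ᶜ a b₁)
    (hnoQ : ¬ ∃ f ∈ G.Qedges T Y, G.ends f = s(a, b)) : False := by
  have hTsub : T ⊆ Set.univ \ Y :=
    fun e he => ⟨Set.mem_univ e, fun hY => hYT e hY he⟩
  have hmono : ∀ {c : V} {u w : V}, G.Reach T {c}ᶜ u w →
      G.Reach (Set.univ \ Y) {c}ᶜ u w :=
    fun h => reach_mono hTsub (fun _ h => h) h
  -- b is not a₁'s neighbour-side vertex
  have ha₁b : a₁ ≠ b := by
    rintro rfl
    exact hTa hba₂
  have hb₂a : b₂ ≠ a := by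
    rintro rfl
    exact hTb hab₁.symm
  -- endpoints of Y-edges are far away
  have hEnd : ∀ y ∈ Y, ∀ x x' : V, G.ends y = s(x, x') →
      ¬ (G.Reach (Set.univ \ Y) {a}ᶜ x b ∧ G.Reach (Set.univ \ Y) {b}ᶜ x a) := by
    intro y hy x x' hye
    rintro ⟨hRab, hRba⟩
    obtain ⟨hxa, hx'a, _, hA⟩ := hsideA y hy x x' hye
    obtain ⟨hxb, hx'b, _, hB⟩ := hsideB y hy x x' hye
    rcases hA with ⟨t1, t2⟩ | ⟨t1, t2⟩
    · -- x on a₁ side : Ra x b impossible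
      exact hRa (((hmono t1).symm.trans' hRab).trans' (hmono hba₂))
    · -- x on a₂ side
      rcases hB with ⟨u1, u2⟩ | ⟨u1, u2⟩
      · -- x on b₁ side : alignment contradiction
        have honb := hOnB y hy x x' hye
        rcases honb with h | h | h
        · exact hxb h.symm
        · exact hx'b h.symm
        apply h
        have hx'bb : ¬ G.Reach T {a}ᶜ x' b :=
          fun hh => hTa ((t2.symm.trans' hh).trans' hba₂)
        have w1 : G.Reach T {b}ᶜ x' a₁ :=
          reach_mono (fun _ h => h) (fun _ h => h.2) (reach_avoid t2 hx'bb)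
        have w2 : G.Reach T {b}ᶜ a₁ a :=
          reach_adj ⟨ha₁b, hab, f₁, hf₁T, by rw [he₁, Sym2.eq_swap]⟩
        have w3 : G.Reach T {b}ᶜ x a := u1.trans' hab₁.symm
        exact w3.trans' ((w1.trans' w2).symm)
      · -- x on b₂ side : Rb x a impossible
        exact hRb ((((hmono u1).symm.trans' hRba).trans' (hmono hab₁)).symm)
  -- the middle region
  set M : Set V := {v | G.Reach (Set.univ \ Y) {a}ᶜ v b ∧
      G.Reach (Set.univ \ Y) {b}ᶜ v a} with hM
  have hMa : ∀ v ∈ M, v ≠ a := by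
    rintro v ⟨hv1, _⟩ rfl
    rcases reach_mem hv1 with h | ⟨h, _⟩
    · exact hab h
    · exact h rfl
  have hMb : ∀ v ∈ M, v ≠ b := by
    rintro v ⟨_, hv2⟩ rfl
    rcases reach_mem hv2 with h | ⟨h, _⟩
    · exact hab h.symm
    · exact h rfl
  set E2 : Set E := {e | ∀ v ∈ G.ends e, v ∈ M ∪ {a, b}} with hE2
  -- M is closed
  have hMcl : ∀ v ∈ M, ∀ e : E, v ∈ G.ends e → e ∈ E2 := by
    intro v hv e hve
    obtain ⟨w', hew⟩ := Sym2.mem_iff_exists.mp hve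
    intro u hu
    rw [hew, Sym2.mem_iff] at hu
    rcases hu with rfl | rfl
    · exact Or.inl hv
    · by_cases hua : u = a
      · exact Or.inr (by rw [hua]; exact Set.mem_insert a {b})
      by_cases hub : u = b
      · exact Or.inr (by rw [hub]; exact Set.mem_insert_of_mem a rfl)
      by_cases hY : e ∈ Y
      · exact absurd ⟨hv.1, hv.2⟩ (hEnd e hY v u hew)
      · refine Or.inl ⟨?_, ?_⟩
        · have hadj : G.Reach (Set.univ \ Y) {a}ᶜ u v :=
            reach_adj ⟨hua, hMa v hv, e, ⟨Set.mem_univ e, hY⟩, by rw [hew, Sym2.eq_swap]⟩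
          exact hadj.trans' hv.1
        · have hadj : G.Reach (Set.univ \ Y) {b}ᶜ u v :=
            reach_adj ⟨hub, hMb v hv, e, ⟨Set.mem_univ e, hY⟩, by rw [hew, Sym2.eq_swap]⟩
          exact hadj.trans' hv.2
  -- the four special edges
  have ha₂M : a₂ ∈ M ∪ {a, b} := by
    by_cases h : a₂ = b
    · exact Or.inr (by rw [h]; exact Set.mem_insert_of_mem a rfl)
    · refine Or.inl ⟨hmono hba₂.symm, ?_⟩
      exact (reach_adj ⟨h, hab, f₂, ⟨Set.mem_univ f₂, fun hY => hYT f₂ hY hf₂T⟩,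
        by rw [he₂, Sym2.eq_swap]⟩)
  have hb₁M : b₁ ∈ M ∪ {a, b} := by
    by_cases h : b₁ = a
    · exact Or.inr (by rw [h]; exact Set.mem_insert a {b})
    · refine Or.inl ⟨?_, hmono hab₁.symm⟩
      exact (reach_adj ⟨h, fun hh => hab hh.symm, g₁,
        ⟨Set.mem_univ g₁, fun hY => hYT g₁ hY hg₁T⟩, by rw [hge₁, Sym2.eq_swap]⟩)
  have hf₂E2 : f₂ ∈ E2 := by
    intro v hv
    rw [he₂, Sym2.mem_iff] at hv
    rcases hv with rfl | rfl
    · exact Or.inr (Set.mem_insert v {b})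
    · exact ha₂M
  have hg₁E2 : g₁ ∈ E2 := by
    intro v hv
    rw [hge₁, Sym2.mem_iff] at hv
    rcases hv with rfl | rfl
    · exact Or.inr (Set.mem_insert_of_mem a rfl)
    · exact hb₁M
  have ha₁M : a₁ ∉ M ∪ ({a, b} : Set V) := by
    rintro (⟨h1, _⟩ | h)
    · exact hRa (h1.trans' (hmono hba₂))
    · rcases h with h | h
      · exact ha₁a h
      · exact ha₁b h
  have hb₂M : b₂ ∉ M ∪ ({a, b} : Set V) := by
    rintro (⟨_, h2⟩ | h)
    · exact hRb ((hmono hab₁).symm.trans' h2.symm)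
    · rcases h with h | h
      · exact hb₂a h
      · exact hb₂b h
  have hf₁E1 : f₁ ∉ E2 := fun h => ha₁M (h a₁ (by rw [he₁]; exact Sym2.mem_mk_right a a₁))
  have hg₂E1 : g₂ ∉ E2 := fun h => hb₂M (h b₂ (by rw [hge₂]; exact Sym2.mem_mk_right b b₂))
  have hf₂g₁ : f₂ ≠ g₁ := by
    rintro rfl
    rw [he₂] at hge₁
    rcases Sym2.eq_iff.mp hge₁ with ⟨h1, _⟩ | ⟨h1, h2⟩
    · exact hab h1
    · exact hnoQ ⟨f₂, hf₂Q, by rw [he₂, h2]⟩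
  have hf₁g₂ : f₁ ≠ g₂ := by
    rintro rfl
    rw [he₁] at hge₂
    rcases Sym2.eq_iff.mp hge₂ with ⟨h1, _⟩ | ⟨h1, h2⟩
    · exact hab h1
    · exact hb₂a h1.symm
  -- vertex intersection is {a, b}
  have hvint : G.verts E2 ∩ G.verts E2ᶜ = {a, b} := by
    apply Set.Subset.antisymm
    · rintro v ⟨⟨e2, he2, hv2⟩, ⟨e1, he1, hv1⟩⟩
      rcases he2 v hv2 with hvM | hvab
      · exact absurd (hMcl v hvM e1 hv1) he1
      · exact hvab
    · rintro v (rfl | rfl)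
      · exact ⟨⟨f₂, hf₂E2, by rw [he₂]; exact Sym2.mem_mk_left v a₂⟩,
          ⟨f₁, hf₁E1, by rw [he₁]; exact Sym2.mem_mk_left v a₁⟩⟩
      · exact ⟨⟨g₁, hg₁E2, by rw [hge₁]; exact Sym2.mem_mk_left v b₁⟩,
          ⟨g₂, hg₂E1, by rw [hge₂]; exact Sym2.mem_mk_left v b₂⟩⟩
  -- the 2-separation
  refine h3.2 2 (by norm_num) (by norm_num) ⟨E2, E2ᶜ, ?_, disjoint_compl_right, ?_, ?_, ?_⟩
  · exact Set.union_compl_self E2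
  · have := (Set.one_lt_ncard_iff (Set.toFinite E2)).mpr ⟨f₂, g₁, hf₂E2, hg₁E2, hf₂g₁⟩
    omega
  · have := (Set.one_lt_ncard_iff (Set.toFinite E2ᶜ)).mpr ⟨f₁, g₂, hf₁E1, hg₂E1, hf₁g₂⟩
    omega
  · rw [hvint, Set.ncard_pair hab]

end Multigraph

open Multigraph in
/-- In a 3-connected graph, any two inner vertices of
`Q = ⋂_{y∈Y} P_y(T)` that are articulation vertices of `G ∖ Y` are adjacent
on `Q`; in particular there are at most two such inner vertices. -/
theorem inner_articulation_adjacent {V E : Type} [Fintype V] [Fintype E]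
    (G : Multigraph V E) (h3 : G.TutteConnected 3)
    (T : Set E) (hT : G.IsSpanningTree T)
    (Y : Set E) (hYT : ∀ y ∈ Y, y ∉ T) (hYne : Y.Nonempty) :
    (∀ a b : V, a ≠ b → G.InnerQ T Y a → G.InnerQ T Y b →
      G.ArticulationVertex (Set.univ \ Y) a →
      G.ArticulationVertex (Set.univ \ Y) b →
      ∃ f ∈ G.Qedges T Y, G.ends f = s(a, b)) ∧
    {v : V | G.InnerQ T Y v ∧
      G.ArticulationVertex (Set.univ \ Y) v}.ncard ≤ 2 := by
  have hTsub : T ⊆ Set.univ \ Y :=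
    fun e he => ⟨Set.mem_univ e, fun hY => hYT e hY he⟩
  have main : ∀ a b : V, a ≠ b → G.InnerQ T Y a → G.InnerQ T Y b →
      G.ArticulationVertex (Set.univ \ Y) a →
      G.ArticulationVertex (Set.univ \ Y) b →
      ∃ f ∈ G.Qedges T Y, G.ends f = s(a, b) := by
    intro a b hab hIa hIb hartA hartB
    by_contra hnoQ
    obtain ⟨hOnA, f₁, hf₁Q, f₂, hf₂Q, hf12, haf₁, haf₂⟩ := hIa
    obtain ⟨hOnB, g₁, hg₁Q, g₂, hg₂Q, hg12, hbg₁, hbg₂⟩ := hIb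
    obtain ⟨a₁, a₂, he₁, he₂, ha₁a, ha₂a, ha₁₂, hf₁T, hf₂T, hTa, hsideA⟩ :=
      side_structure hT hYne hf₁Q hf₂Q hf12 haf₁ haf₂
    obtain ⟨b₁, b₂, hge₁, hge₂, hb₁b, hb₂b, hb₁₂, hg₁T, hg₂T, hTb, hsideB⟩ :=
      side_structure hT hYne hg₁Q hg₂Q hg12 hbg₁ hbg₂
    have hRa := sides_not_reach h3 hartA hTsub hsideA
    have hRb := sides_not_reach h3 hartB hTsub hsideB
    have hTa' : ¬ G.Reach T {a}ᶜ a₂ a₁ := fun h => hTa h.symm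
    have hTb' : ¬ G.Reach T {b}ᶜ b₂ b₁ := fun h => hTb h.symm
    have hRa' : ¬ G.Reach (Set.univ \ Y) {a}ᶜ a₂ a₁ := fun h => hRa h.symm
    have hRb' : ¬ G.Reach (Set.univ \ Y) {b}ᶜ b₂ b₁ := fun h => hRb h.symm
    have hsideA' : ∀ y ∈ Y, ∀ x x' : V, G.ends y = s(x, x') →
        x ≠ a ∧ x' ≠ a ∧ x ≠ x' ∧
        ((G.Reach T {a}ᶜ x a₂ ∧ G.Reach T {a}ᶜ x' a₁) ∨
         (G.Reach T {a}ᶜ x a₁ ∧ G.Reach T {a}ᶜ x' a₂)) := by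
      intro y hy x x' hye
      obtain ⟨h1, h2, h3', h4⟩ := hsideA y hy x x' hye
      exact ⟨h1, h2, h3', h4.symm⟩
    have hsideB' : ∀ y ∈ Y, ∀ x x' : V, G.ends y = s(x, x') →
        x ≠ b ∧ x' ≠ b ∧ x ≠ x' ∧
        ((G.Reach T {b}ᶜ x b₂ ∧ G.Reach T {b}ᶜ x' b₁) ∨
         (G.Reach T {b}ᶜ x b₁ ∧ G.Reach T {b}ᶜ x' b₂)) := by
      intro y hy x x' hye
      obtain ⟨h1, h2, h3', h4⟩ := hsideB y hy x x' hye
      exact ⟨h1, h2, h3', h4.symm⟩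
    -- locate b relative to a and a relative to b
    obtain ⟨y₀, hy₀⟩ := hYne
    obtain ⟨x₀, x₀', hy₀e⟩ := sym2_rep (G.ends y₀)
    obtain ⟨hx₀a, hx₀'a, hx₀x₀', hA⟩ := hsideA y₀ hy₀ x₀ x₀' hy₀e
    obtain ⟨hx₀b, hx₀'b, _, hB⟩ := hsideB y₀ hy₀ x₀ x₀' hy₀e
    have honB := hOnB y₀ hy₀ x₀ x₀' hy₀e
    have honA := hOnA y₀ hy₀ x₀ x₀' hy₀e
    have hbloc : G.Reach T {a}ᶜ b a₁ ∨ G.Reach T {a}ᶜ b a₂ := by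
      rcases hA with ⟨t1, t2⟩ | ⟨t1, t2⟩
      · exact locate hf₁T hf₂T he₁ he₂ hTa t1 t2 honB (Ne.symm hab)
      · exact (locate hf₂T hf₁T he₂ he₁ hTa' t1 t2 honB (Ne.symm hab)).symm
    have haloc : G.Reach T {b}ᶜ a b₁ ∨ G.Reach T {b}ᶜ a b₂ := by
      rcases hB with ⟨t1, t2⟩ | ⟨t1, t2⟩
      · exact locate hg₁T hg₂T hge₁ hge₂ hTb t1 t2 honA hab
      · exact (locate hg₂T hg₁T hge₂ hge₁ hTb' t1 t2 honA hab).symm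
    rcases hbloc with hba₂ | hba₂ <;> rcases haloc with hab₁ | hab₁
    · -- b on a₁ side, a on b₁ side : swap f's
      exact key_lemma h3 hT hYT hab hf₂T hf₁T hg₁T hg₂T he₂ he₁ hge₁ hge₂
        ha₂a hb₂b hf₁Q hTa' hTb hsideA' hsideB hOnB hRa' hRb hba₂ hab₁ hnoQ
    · -- b on a₁ side, a on b₂ side : swap f's and g's
      exact key_lemma h3 hT hYT hab hf₂T hf₁T hg₂T hg₁T he₂ he₁ hge₂ hge₁
        ha₂a hb₁b hf₁Q hTa' hTb' hsideA' hsideB' hOnB hRa' hRb' hba₂ hab₁ hnoQ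
    · -- b on a₂ side, a on b₁ side : direct
      exact key_lemma h3 hT hYT hab hf₁T hf₂T hg₁T hg₂T he₁ he₂ hge₁ hge₂
        ha₁a hb₂b hf₂Q hTa hTb hsideA hsideB hOnB hRa hRb hba₂ hab₁ hnoQ
    · -- b on a₂ side, a on b₂ side : swap g's
      exact key_lemma h3 hT hYT hab hf₁T hf₂T hg₂T hg₁T he₁ he₂ hge₂ hge₁
        ha₁a hb₁b hf₂Q hTa hTb' hsideA hsideB' hOnB hRa hRb' hba₂ hab₁ hnoQ
  refine ⟨main, ?_⟩
  by_contra hcard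
  push_neg at hcard
  obtain ⟨x, y, z, hx, hy, hz, hxy, hxz, hyz⟩ :=
    (Set.two_lt_ncard_iff (Set.toFinite _)).mp hcard
  obtain ⟨f, hfQ, hfe⟩ := main x y hxy hx.1 hy.1 hx.2 hy.2
  obtain ⟨g, hgQ, hge⟩ := main y z hyz hy.1 hz.1 hy.2 hz.2
  obtain ⟨h, hhQ, hhe⟩ := main x z hxz hx.1 hz.1 hx.2 hz.2
  obtain ⟨y₀, hy₀⟩ := hYne
  have hfT : f ∈ T := (Set.mem_iInter₂.mp hfQ y₀ hy₀).1
  have hgT : g ∈ T := (Set.mem_iInter₂.mp hgQ y₀ hy₀).1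
  have hhT : h ∈ T := (Set.mem_iInter₂.mp hhQ y₀ hy₀).1
  have hfh : f ≠ h := by
    rintro rfl
    rw [hfe] at hhe
    rcases Sym2.eq_iff.mp hhe with ⟨_, h2⟩ | ⟨h1, _⟩
    · exact hyz h2
    · exact hxz h1
  have hgh : g ≠ h := by
    rintro rfl
    rw [hge] at hhe
    rcases Sym2.eq_iff.mp hhe with ⟨h1, _⟩ | ⟨h1, h2⟩
    · exact hxy h1.symm
    · exact hyz h1
  have hbr : ¬ G.Reach (T \ {h}) Set.univ x z := tree_bridge hT hhT hhe
  apply hbr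
  have s1 : G.Reach (T \ {h}) Set.univ x y :=
    reach_adj ⟨Set.mem_univ x, Set.mem_univ y, f, ⟨hfT, hfh⟩, hfe⟩
  have s2 : G.Reach (T \ {h}) Set.univ y z :=
    reach_adj ⟨Set.mem_univ y, Set.mem_univ z, g, ⟨hgT, hgh⟩, hge⟩
  exact s1.trans' s2
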